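/- Let K be a field of characteristic zero and let D = ∂_{x_1} + (a_2·x_2 + b_2)·∂_{x_2} + (a_3·x_3 + b_3)·∂_{x_3} be the K-derivation of K[x_1,x_2,x_3] with a_2, b_2 ∈ K[x_1], a_3, b_3 ∈ K[x_1,x_2], a_3 ≠ 0, and deg_{x_2} a_3 = 0 (so a_3 ∈ K[x_1]). If D is a simple derivation, then x_2 does not belong to Im D = D(K[x_1,x_2,x_3]); that is, there is no f ∈ K[x_1,x_2,x_3] with D(f) = x_2. -/

import Mathlib

open MvPolynomial

/-- A `K`-subspace `M` of `R` is a Mathieu–Zhao space if for all `a, b ∈ R` such that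
`a ^ m ∈ M` for all `m ≥ 1`, there exists `N` such that `b * a ^ m ∈ M` for all `m ≥ N`. -/
def IsMathieuZhao (K : Type*) {R : Type*} [Field K] [CommRing R] [Algebra K R]
    (M : Submodule K R) : Prop :=
  ∀ a b : R, (∀ m : ℕ, 1 ≤ m → a ^ m ∈ M) →
    ∃ N : ℕ, ∀ m : ℕ, N ≤ m → b * a ^ m ∈ M

/-- A `K`-derivation `D` of `R` is simple if the only ideals `I` of `R` with `D(I) ⊆ I`
are `0` and `R`. -/
def Derivation.IsSimple {K R : Type*} [CommRing K] [CommRing R] [Algebra K R]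
    (D : Derivation K R R) : Prop :=
  ∀ I : Ideal R, (∀ a ∈ I, D a ∈ I) → I = ⊥ ∨ I = ⊤



noncomputable section St17Aux

open Polynomial

/-- Two derivations on `A[X]` agreeing on constants and on `X` agree everywhere. -/
theorem st17_der_poly_eq {R A M : Type*} [CommRing R] [CommRing A] [Algebra R A]
    [AddCommGroup M] [Module R M] [Module (Polynomial A) M]
    (d₁ d₂ : Derivation R (Polynomial A) M)
    (hC : ∀ a : A, d₁ (Polynomial.C a) = d₂ (Polynomial.C a))
    (hX : d₁ Polynomial.X = d₂ Polynomial.X) (p : Polynomial A) :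
    d₁ p = d₂ p := by
  induction p using Polynomial.induction_on with
  | C a => exact hC a
  | add p q hp hq => rw [map_add, map_add, hp, hq]
  | monomial n k ih =>
    have h : (Polynomial.C k * Polynomial.X ^ (n + 1) : Polynomial A)
        = Polynomial.C k * Polynomial.X ^ n * Polynomial.X := by ring
    rw [h, Derivation.leibniz d₁ (Polynomial.C k * Polynomial.X ^ n) Polynomial.X,
      Derivation.leibniz d₂ (Polynomial.C k * Polynomial.X ^ n) Polynomial.X, ih, hX]

/-- Extension of a derivation `d` on `A` to `A[X]`, coefficientwise plus `w * derivative`. -/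
def st17ext {R A : Type*} [CommRing R] [CommRing A] [Algebra R A]
    (d : Derivation R A A) (w : Polynomial A) :
    Derivation R (Polynomial A) (Polynomial A) :=
  PolynomialModule.equivPolynomialSelf.toLinearMap.compDer d.mapCoeffs
    + w • ((Polynomial.derivative' (R := A)).restrictScalars R)

theorem st17ext_apply {R A : Type*} [CommRing R] [CommRing A] [Algebra R A]
    (d : Derivation R A A) (w : Polynomial A) (p : Polynomial A) :
    st17ext d w p = PolynomialModule.equivPolynomialSelf (d.mapCoeffs p)
      + w * Polynomial.derivative p := rfl

theorem st17_coeff_equiv {A : Type*} [CommRing A] (q : PolynomialModule A A) (i : ℕ) :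
    Polynomial.coeff (PolynomialModule.equivPolynomialSelf q) i = q.coeff i := rfl

theorem st17ext_coeff {R A : Type*} [CommRing R] [CommRing A] [Algebra R A]
    (d : Derivation R A A) (w : Polynomial A) (p : Polynomial A) (i : ℕ) :
    Polynomial.coeff (st17ext d w p) i
      = d (Polynomial.coeff p i) + Polynomial.coeff (w * Polynomial.derivative p) i := by
  rw [st17ext_apply, Polynomial.coeff_add, st17_coeff_equiv, Derivation.mapCoeffs_apply]

theorem st17ext_C {R A : Type*} [CommRing R] [CommRing A] [Algebra R A]
    (d : Derivation R A A) (w : Polynomial A) (a : A) :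
    st17ext d w (Polynomial.C a) = Polynomial.C (d a) := by
  rw [st17ext_apply, Polynomial.derivative_C, mul_zero, add_zero, Derivation.mapCoeffs_C]
  show PolynomialModule.equivPolynomial _ = _
  rw [PolynomialModule.equivPolynomial_single, Polynomial.monomial_zero_left]

theorem st17ext_X {R A : Type*} [CommRing R] [CommRing A] [Algebra R A]
    (d : Derivation R A A) (w : Polynomial A) :
    st17ext d w (Polynomial.X) = w := by
  rw [st17ext_apply, Polynomial.derivative_X, mul_one, Derivation.mapCoeffs_X, map_zero, zero_add]

noncomputable section St17Aux2
open Polynomial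

variable {K : Type*} [Field K] [CharZero K]

theorem st17_poly1 {c l : Polynomial K} (hc : c ≠ 0)
    (h : Polynomial.derivative c + l * c = 0) : l = 0 := by
  by_contra hl
  have hlc : l * c ≠ 0 := mul_ne_zero hl hc
  have hdc : Polynomial.derivative c = -(l * c) := by linear_combination h
  have hd0 : Polynomial.derivative c ≠ 0 := by rw [hdc]; exact neg_ne_zero.mpr hlc
  have hcd : c.natDegree ≠ 0 := by
    intro h0
    obtain ⟨x, rfl⟩ := Polynomial.natDegree_eq_zero.mp h0
    exact hd0 (Polynomial.derivative_C)
  have h1 : (Polynomial.derivative c).natDegree < c.natDegree :=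
    Polynomial.natDegree_derivative_lt hcd
  have h2 : (l * c).natDegree = l.natDegree + c.natDegree := Polynomial.natDegree_mul hl hc
  rw [hdc, Polynomial.natDegree_neg, h2] at h1
  omega

theorem st17_poly2 {c l : Polynomial K} (hc : c ≠ 0) (hl : l ≠ 0)
    (h : Polynomial.derivative c + l * c = 1) : ∃ e : K, e ≠ 0 ∧ l = Polynomial.C e := by
  have hcd : c.natDegree = 0 := by
    by_contra hcd
    have h1 : (Polynomial.derivative c).natDegree < (l * c).natDegree := by
      have := Polynomial.natDegree_derivative_lt hcd
      have h2 : (l * c).natDegree = l.natDegree + c.natDegree := Polynomial.natDegree_mul hl hc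
      omega
    have h3 : (Polynomial.derivative c + l * c).natDegree = (l * c).natDegree :=
      Polynomial.natDegree_add_eq_right_of_natDegree_lt h1
    rw [h] at h3
    have h2 : (l * c).natDegree = l.natDegree + c.natDegree := Polynomial.natDegree_mul hl hc
    simp only [Polynomial.natDegree_one] at h3
    omega
  obtain ⟨k, rfl⟩ := Polynomial.natDegree_eq_zero.mp hcd
  have hk : k ≠ 0 := fun h0 => hc (by rw [h0, map_zero])
  rw [Polynomial.derivative_C, zero_add] at h
  refine ⟨k⁻¹, inv_ne_zero hk, ?_⟩
  have : l * Polynomial.C k * Polynomial.C k⁻¹ = Polynomial.C k⁻¹ := by rw [h, one_mul]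
  rw [mul_assoc, ← map_mul, mul_inv_cancel₀ hk, map_one, mul_one] at this
  exact this

theorem st17_anti (b : Polynomial K) : ∃ B : Polynomial K, Polynomial.derivative B = b := by
  induction b using Polynomial.induction_on' with
  | add p q hp hq =>
    obtain ⟨P, hP⟩ := hp; obtain ⟨Q, hQ⟩ := hq
    exact ⟨P + Q, by rw [map_add, hP, hQ]⟩
  | monomial n a =>
    refine ⟨Polynomial.C (a / (n + 1)) * Polynomial.X ^ (n + 1), ?_⟩
    rw [Polynomial.derivative_C_mul_X_pow]
    have hn : ((n : K) + 1) ≠ 0 := Nat.cast_add_one_ne_zero n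
    rw [Nat.add_sub_cancel, ← Polynomial.C_mul_X_pow_eq_monomial]
    congr 1
    rw [Nat.cast_add, Nat.cast_one, div_mul_cancel₀ a hn]

theorem st17_solve (e : K) (he : e ≠ 0) (b : Polynomial K) :
    ∃ u : Polynomial K, Polynomial.derivative u + b = Polynomial.C e * u := by
  set N := b.natDegree with hN
  refine ⟨∑ j ∈ Finset.range (N + 1), (e⁻¹) ^ (j + 1) • (Polynomial.derivative)^[j] b, ?_⟩
  have hCe : ∀ p : Polynomial K, ∀ k : K, Polynomial.C e * (k • p) = (e * k) • p := by
    intro p k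
    simp only [Polynomial.smul_eq_C_mul, map_mul]
    ring
  rw [Finset.mul_sum, map_sum]
  have hL : ∀ j, Polynomial.derivative ((e⁻¹) ^ (j + 1) • (Polynomial.derivative)^[j] b)
      = (e⁻¹) ^ (j + 1) • (Polynomial.derivative)^[j + 1] b := by
    intro j
    rw [Polynomial.derivative_smul, Function.iterate_succ_apply']
  have hR : ∀ j, Polynomial.C e * ((e⁻¹) ^ (j + 1) • (Polynomial.derivative)^[j] b)
      = (e⁻¹) ^ j • (Polynomial.derivative)^[j] b := by
    intro j
    rw [hCe]
    congr 1
    rw [pow_succ, mul_left_comm, mul_inv_cancel₀ he, mul_one]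
  simp only [hL, hR]
  have hz : (Polynomial.derivative)^[N + 1] b = 0 :=
    Polynomial.iterate_derivative_eq_zero (by omega)
  rw [Finset.sum_range_succ, hz, smul_zero, add_zero,
    Finset.sum_range_succ' (fun j => (e⁻¹ : K) ^ j • (Polynomial.derivative)^[j] b) N]
  simp


theorem st17_compDer_apply {R A M N : Type*} [CommRing R] [CommRing A] [Algebra R A]
    [AddCommGroup M] [Module A M] [Module R M] [AddCommGroup N] [Module A N] [Module R N]
    [IsScalarTower R A M] [IsScalarTower R A N]
    (f : M →ₗ[A] N) (D : Derivation R A M) (a : A) :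
    LinearMap.compDer f D a = f (D a) := rfl

theorem st17_compAlg_apply {R A B : Type*} [CommRing R] [CommRing A] [CommRing B]
    [Algebra R A] [Algebra R B] [Algebra A B] [IsScalarTower R A B]
    (d : Derivation R B B) (a : A) :
    d.compAlgebraMap A a = d (algebraMap A B a) := rfl

theorem st17_coeff_lin {A : Type*} [CommRing A] (a b : A) (p : Polynomial A) (m : ℕ) :
    ((Polynomial.C a * Polynomial.X + Polynomial.C b) * p).coeff (m + 1)
      = a * p.coeff m + b * p.coeff (m + 1) := by
  rw [add_mul, Polynomial.coeff_add, mul_assoc, Polynomial.coeff_C_mul,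
    Polynomial.coeff_C_mul, Polynomial.coeff_X_mul]

section Bside
variable {K : Type*} [Field K] [CharZero K]

local notation "A1" => Polynomial K
local notation "A2" => Polynomial (Polynomial K)
local notation "A3" => Polynomial (Polynomial (Polynomial K))

theorem st17_bside (α2 β2 α3 : A1) (β3 : A2) (hα3 : α3 ≠ 0)
    (d : Derivation K A3 A3)
    (h1 : d (Polynomial.C (Polynomial.C Polynomial.X)) = 1)
    (h2 : d (Polynomial.C Polynomial.X)
      = Polynomial.C (Polynomial.C α2) * Polynomial.C Polynomial.X
        + Polynomial.C (Polynomial.C β2))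
    (h3 : d Polynomial.X
      = Polynomial.C (Polynomial.C α3) * Polynomial.X + Polynomial.C β3)
    (F : A3) (hF : d F = Polynomial.C Polynomial.X) :
    ∃ g w : A3, g ≠ 0 ∧ ¬ IsUnit g ∧ d g = w * g := by
  classical
  set w2 : A2 := Polynomial.C α2 * Polynomial.X + Polynomial.C β2 with hw2
  set dA : Derivation K A2 A2 := st17ext (Polynomial.derivative' (R := K)) w2 with hdA
  set dX : A3 := Polynomial.C (Polynomial.C α3) * Polynomial.X + Polynomial.C β3 with hdXdef
  -- Step A
  have hA' : ∀ b : A1, d (Polynomial.C (Polynomial.C b))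
      = Polynomial.C (Polynomial.C (Polynomial.derivative b)) := by
    have hmap : ∀ b : A1, algebraMap A1 A3 b = Polynomial.C (Polynomial.C b) := by
      intro b
      rw [Polynomial.algebraMap_apply, Polynomial.algebraMap_apply, Algebra.algebraMap_self_apply]
    have he : (d.compAlgebraMap A1 : Derivation K A1 A3)
        = LinearMap.compDer (Algebra.linearMap A1 A3) (Polynomial.derivative' (R := K)) := by
      apply Polynomial.derivation_ext
      show d (algebraMap A1 A3 Polynomial.X)
        = algebraMap A1 A3 (Polynomial.derivative Polynomial.X)
      rw [Polynomial.derivative_X, map_one, hmap]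
      exact h1
    intro b
    have hb : d (algebraMap A1 A3 b) = algebraMap A1 A3 (Polynomial.derivative b) :=
      DFunLike.congr_fun he b
    rw [hmap, hmap] at hb
    exact hb
  -- Step B
  have hB : ∀ a : A2, d (Polynomial.C a) = Polynomial.C (dA a) := by
    have hmap : ∀ a : A2, algebraMap A2 A3 a = Polynomial.C a := by
      intro a
      rw [Polynomial.algebraMap_apply, Algebra.algebraMap_self_apply]
    intro a
    have key := st17_der_poly_eq (R := K) (A := A1) (M := A3)
      (d.compAlgebraMap A2) (LinearMap.compDer (Algebra.linearMap A2 A3) dA) ?_ ?_ a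
    · have key' : d (algebraMap A2 A3 a) = algebraMap A2 A3 (dA a) := key
      rw [hmap, hmap] at key'
      exact key'
    · intro b
      show d (algebraMap A2 A3 (Polynomial.C b)) = algebraMap A2 A3 (dA (Polynomial.C b))
      rw [hmap, hmap, hA' b, hdA, st17ext_C]
      simp
    · show d (algebraMap A2 A3 Polynomial.X) = algebraMap A2 A3 (dA Polynomial.X)
      rw [hmap, hmap, h2, hdA, st17ext_X, hw2]
      simp [map_add, map_mul]
  -- Step C
  have hC3 : ∀ p : A3, d p = st17ext dA dX p := by
    intro p
    refine st17_der_poly_eq (R := K) (A := A2) (M := A3) d (st17ext dA dX) ?_ ?_ p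
    · intro a; rw [hB a, st17ext_C]
    · rw [st17ext_X, h3]

  -- Darboux producer
  have mk : ∀ g lam : A2, g ≠ 0 → ¬ IsUnit g → dA g = lam * g →
      ∃ g' w : A3, g' ≠ 0 ∧ ¬ IsUnit g' ∧ d g' = w * g' := by
    intro g lam hg hgu hDg
    refine ⟨Polynomial.C g, Polynomial.C lam, ?_, ?_, ?_⟩
    · simpa using hg
    · intro h
      exact hgu (Polynomial.isUnit_C.mp h)
    · rw [hB g, hDg, map_mul]
  -- the Darboux element in the degenerate case α2 = 0
  have darb0 : α2 = 0 → ∃ g' w : A3, g' ≠ 0 ∧ ¬ IsUnit g' ∧ d g' = w * g' := by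
    intro h0
    obtain ⟨B2, hB2⟩ := st17_anti β2
    refine mk (Polynomial.X - Polynomial.C B2) 0 ?_ ?_ ?_
    · intro h
      have := congrArg (fun p => p.coeff 1) h
      simp [Polynomial.coeff_C] at this
    · intro hu
      obtain ⟨r, hr, hrg⟩ := Polynomial.isUnit_iff.mp hu
      have := congrArg (fun p => p.coeff 1) hrg
      simp [Polynomial.coeff_C] at this
    · rw [hdA, map_sub, st17ext_X, st17ext_C]
      simp [Polynomial.derivative'_apply, hB2, hw2, h0]
  have hFd : st17ext dA dX F = Polynomial.C Polynomial.X := by rw [← hC3 F]; exact hF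
  rcases Nat.eq_zero_or_pos F.natDegree with hn | hn
  · -- F is constant in x₃ : F = C q
    obtain ⟨q, hq⟩ := Polynomial.natDegree_eq_zero.mp hn
    have hq2 : dA q = Polynomial.X := by
      have hCq : Polynomial.C (dA q) = (Polynomial.C (Polynomial.X : A2) : A3) := by
        rw [← hB q, hq, hF]
      exact Polynomial.C_injective hCq
    rcases Nat.eq_zero_or_pos q.natDegree with hm | hm
    · -- q constant in x₂: impossible
      exfalso
      obtain ⟨c, hc⟩ := Polynomial.natDegree_eq_zero.mp hm
      have hqc : dA q = Polynomial.C (Polynomial.derivative c) := by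
        rw [← hc, hdA, st17ext_C, Polynomial.derivative'_apply]
      rw [hq2] at hqc
      have h10 := congrArg (fun p => p.coeff 1) hqc
      simp [Polynomial.coeff_C] at h10
    · -- q has degree m'+1 in x₂
      obtain ⟨m', hm'⟩ := Nat.exists_eq_succ_of_ne_zero (Nat.pos_iff_ne_zero.mp hm)
      have hq0 : q ≠ 0 := by
        intro h
        rw [h, Polynomial.natDegree_zero] at hm'
        omega
      have hc0 : q.coeff (m' + 1) ≠ 0 := by
        have := Polynomial.leadingCoeff_ne_zero.mpr hq0
        rwa [Polynomial.leadingCoeff, hm'] at this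
      have hco := congrArg (fun p => p.coeff (m' + 1)) hq2
      rw [hdA, st17ext_coeff, hw2, st17_coeff_lin, Polynomial.coeff_derivative,
        Polynomial.coeff_derivative,
        show q.coeff (m' + 1 + 1) = 0 from
          Polynomial.coeff_eq_zero_of_natDegree_lt (by omega),
        zero_mul, mul_zero, add_zero, Polynomial.derivative'_apply] at hco
      -- hco : derivative (q.coeff (m'+1)) + α2 * (q.coeff (m'+1) * (m' + 1)) = X.coeff (m'+1)
      rcases Nat.eq_zero_or_pos m' with hm0 | hm0
      · -- degree exactly 1 in x₂
        subst hm0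
        rw [Polynomial.coeff_X_one] at hco
        by_cases h0 : α2 = 0
        · exact darb0 h0
        · have hco' : Polynomial.derivative (q.coeff 1) + α2 * q.coeff 1 = 1 := by
            have := hco
            push_cast at this
            linear_combination this
          obtain ⟨e, he, hee⟩ := st17_poly2 hc0 h0 hco'
          obtain ⟨u, hu⟩ := st17_solve e he β2
          refine mk (Polynomial.X + Polynomial.C u) (Polynomial.C α2) ?_ ?_ ?_
          · intro h
            have := congrArg (fun p => p.coeff 1) h
            simp [Polynomial.coeff_C] at this
          · intro hun
            obtain ⟨r, hr, hrg⟩ := Polynomial.isUnit_iff.mp hun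
            have := congrArg (fun p => p.coeff 1) hrg
            simp [Polynomial.coeff_C] at this
          · rw [hdA, map_add, st17ext_X, st17ext_C, Polynomial.derivative'_apply, hw2, hee]
            have hCu := congrArg (Polynomial.C : A1 →+* A2) hu
            simp only [map_add, map_mul] at hCu
            linear_combination hCu
      · -- degree ≥ 2 in x₂: forces α2 = 0
        have hX0 : (Polynomial.X : A1[X]).coeff (m' + 1) = 0 := by
          rw [Polynomial.coeff_X, if_neg (by omega)]
        rw [hX0] at hco
        have hl := st17_poly1 hc0 (l := ((m' : A1) + 1) * α2) (by push_cast at hco ⊢; linear_combination hco)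
        have hm1 : ((m' : A1) + 1) ≠ 0 := Nat.cast_add_one_ne_zero m'
        rcases mul_eq_zero.mp hl with h | h
        · exact absurd h hm1
        · exact darb0 h
  · -- F has positive degree n'+1 in x₃
    obtain ⟨n', hn'⟩ := Nat.exists_eq_succ_of_ne_zero (Nat.pos_iff_ne_zero.mp hn)
    have hF0 : F ≠ 0 := by
      intro h
      rw [h, map_zero] at hFd
      exact Polynomial.X_ne_zero (R := A1) (by simpa using hFd.symm)
    set g : A2 := F.coeff F.natDegree with hgdef
    have hg : g ≠ 0 := Polynomial.leadingCoeff_ne_zero.mpr hF0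
    have hco := congrArg (fun p => p.coeff F.natDegree) hFd
    rw [st17ext_coeff, hdXdef, hn', st17_coeff_lin, Polynomial.coeff_derivative,
      Polynomial.coeff_derivative,
      show F.coeff (n' + 1 + 1) = 0 from
        Polynomial.coeff_eq_zero_of_natDegree_lt (by omega),
      zero_mul, mul_zero, add_zero, Polynomial.coeff_C, if_neg (by omega)] at hco
    -- hco : dA (F.coeff (n'+1)) + C α3 * (F.coeff (n'+1) * (n'+1)) = 0
    set μ : A1 := ((n' + 1 : ℕ) : A1) * α3 with hμdef
    have hμ : μ ≠ 0 := mul_ne_zero (Nat.cast_ne_zero.mpr (by omega)) hα3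
    have hDg : dA g = (-(Polynomial.C μ)) * g := by
      have hcast : ((n' : A2) + 1) = Polynomial.C (((n' + 1 : ℕ)) : A1) := by
        rw [map_natCast]
        push_cast
        ring
      simp only [Nat.succ_eq_add_one] at hco
      rw [hn', Nat.succ_eq_add_one] at hgdef
      rw [← hgdef] at hco
      have h1' : dA g = -(Polynomial.C α3 * (g * ((n' : A2) + 1))) :=
        eq_neg_of_add_eq_zero_left hco
      rw [h1', hcast, hμdef, map_mul]
      ring
    have hgu : ¬ IsUnit g := by
      intro hu
      obtain ⟨r, hr, hrg⟩ := Polynomial.isUnit_iff.mp hu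
      obtain ⟨k, hk, hkr⟩ := Polynomial.isUnit_iff.mp hr
      have hz : dA g = 0 := by
        rw [← hrg, ← hkr, hdA, st17ext_C, Polynomial.derivative'_apply,
          Polynomial.derivative_C, map_zero]
      rw [hz] at hDg
      rcases mul_eq_zero.mp hDg.symm with h | h
      · rw [neg_eq_zero] at h
        exact hμ (by simpa using h)
      · exact hg h
    exact mk g (-(Polynomial.C μ)) hg hgu hDg


end Bside

end St17Aux2
end St17Aux


noncomputable section St17Transport

theorem st17_darboux {K R : Type*} [CommRing K] [CommRing R] [Algebra K R]
    (D : Derivation K R R) (g w : R) (hg : g ≠ 0) (hgu : ¬ IsUnit g)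
    (hDg : D g = w * g) : ¬ D.IsSimple := by
  intro hs
  have hstab : ∀ a ∈ Ideal.span {g}, D a ∈ Ideal.span {g} := by
    intro a ha
    rw [Ideal.mem_span_singleton] at ha ⊢
    obtain ⟨c, rfl⟩ := ha
    rw [Derivation.leibniz, smul_eq_mul, smul_eq_mul, hDg]
    exact dvd_add (dvd_mul_right g (D c)) ⟨c * w, by ring⟩
  rcases hs (Ideal.span {g}) hstab with h | h
  · have : g ∈ (⊥ : Ideal R) := h ▸ Ideal.subset_span (Set.mem_singleton g)
    exact hg (Ideal.mem_bot.mp this)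
  · exact hgu (Ideal.span_singleton_eq_top.mp h)

variable {K : Type*} [CommSemiring K]

def st17φ : MvPolynomial (Fin 3) K →ₐ[K] Polynomial (Polynomial (Polynomial K)) :=
  MvPolynomial.aeval (fun i =>
    (![Polynomial.C (Polynomial.C Polynomial.X), Polynomial.C Polynomial.X, Polynomial.X] :
      Fin 3 → Polynomial (Polynomial (Polynomial K))) i)

def st17χ1 : Polynomial K →ₐ[K] MvPolynomial (Fin 3) K :=
  Polynomial.aeval (MvPolynomial.X 0)

def st17χ2 : Polynomial (Polynomial K) →ₐ[K] MvPolynomial (Fin 3) K :=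
  Polynomial.aevalTower st17χ1 (MvPolynomial.X 1)

def st17ψ : Polynomial (Polynomial (Polynomial K)) →ₐ[K] MvPolynomial (Fin 3) K :=
  Polynomial.aevalTower st17χ2 (MvPolynomial.X 2)

theorem st17φ_X0 : st17φ (K := K) (MvPolynomial.X 0)
    = Polynomial.C (Polynomial.C Polynomial.X) := by
  unfold st17φ; rw [MvPolynomial.aeval_X]; rfl

theorem st17φ_X1 : st17φ (K := K) (MvPolynomial.X 1)
    = Polynomial.C Polynomial.X := by
  unfold st17φ; rw [MvPolynomial.aeval_X]; rfl

theorem st17φ_X2 : st17φ (K := K) (MvPolynomial.X 2)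
    = Polynomial.X := by
  unfold st17φ; rw [MvPolynomial.aeval_X]; rfl

theorem st17ψ_C (a : Polynomial (Polynomial K)) :
    st17ψ (Polynomial.C a) = st17χ2 a := Polynomial.aevalTower_C _ _ _

theorem st17ψ_X : st17ψ (K := K) Polynomial.X = MvPolynomial.X 2 :=
  Polynomial.aevalTower_X _ _

theorem st17χ2_C (a : Polynomial K) : st17χ2 (Polynomial.C a) = st17χ1 a :=
  Polynomial.aevalTower_C _ _ _

theorem st17χ2_X : st17χ2 (K := K) Polynomial.X = MvPolynomial.X 1 :=
  Polynomial.aevalTower_X _ _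

theorem st17χ1_X : st17χ1 (K := K) Polynomial.X = MvPolynomial.X 0 :=
  Polynomial.aeval_X _

theorem st17_ψφ (r : MvPolynomial (Fin 3) K) : st17ψ (st17φ r) = r := by
  have h : (st17ψ.comp st17φ : MvPolynomial (Fin 3) K →ₐ[K] MvPolynomial (Fin 3) K)
      = AlgHom.id K _ := by
    apply MvPolynomial.algHom_ext
    intro i
    fin_cases i
    · show st17ψ (st17φ (MvPolynomial.X 0)) = MvPolynomial.X 0
      rw [st17φ_X0, st17ψ_C, st17χ2_C, st17χ1_X]
    · show st17ψ (st17φ (MvPolynomial.X 1)) = MvPolynomial.X 1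
      rw [st17φ_X1, st17ψ_C, st17χ2_X]
    · show st17ψ (st17φ (MvPolynomial.X 2)) = MvPolynomial.X 2
      rw [st17φ_X2, st17ψ_X]
  exact DFunLike.congr_fun h r

theorem st17_φψ (b : Polynomial (Polynomial (Polynomial K))) : st17φ (st17ψ b) = b := by
  have h : (st17φ.comp st17ψ :
      Polynomial (Polynomial (Polynomial K)) →ₐ[K] Polynomial (Polynomial (Polynomial K)))
      = AlgHom.id K _ := by
    apply Polynomial.algHom_ext'
    · apply Polynomial.algHom_ext'
      · apply Polynomial.algHom_ext
        show st17φ (st17ψ (Polynomial.C (Polynomial.C Polynomial.X)))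
          = Polynomial.C (Polynomial.C Polynomial.X)
        rw [st17ψ_C, st17χ2_C, st17χ1_X, st17φ_X0]
      · show st17φ (st17ψ (Polynomial.C Polynomial.X)) = Polynomial.C Polynomial.X
        rw [st17ψ_C, st17χ2_X, st17φ_X1]
    · show st17φ (st17ψ Polynomial.X) = Polynomial.X
      rw [st17ψ_X, st17φ_X2]
  exact DFunLike.congr_fun h b

end St17Transport

noncomputable section St17Conj

/-- Conjugating a derivation by an algebra isomorphism pair. -/
def st17conj {K R S : Type*} [CommSemiring K] [CommSemiring R] [CommSemiring S]
    [Algebra K R] [Algebra K S] (φ : R →ₐ[K] S) (ψ : S →ₐ[K] R)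
    (hφψ : ∀ b, φ (ψ b) = b) (D : Derivation K R R) : Derivation K S S where
  toLinearMap := φ.toLinearMap ∘ₗ D.toLinearMap ∘ₗ ψ.toLinearMap
  map_one_eq_zero' := by
    show φ (D (ψ 1)) = 0
    rw [map_one, Derivation.map_one_eq_zero, map_zero]
  leibniz' := fun a b => by
    show φ (D (ψ (a * b))) = a • φ (D (ψ b)) + b • φ (D (ψ a))
    rw [map_mul, Derivation.leibniz, map_add, smul_eq_mul, smul_eq_mul, map_mul, map_mul,
      hφψ, hφψ, smul_eq_mul, smul_eq_mul]

theorem st17conj_apply {K R S : Type*} [CommSemiring K] [CommSemiring R] [CommSemiring S]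
    [Algebra K R] [Algebra K S] (φ : R →ₐ[K] S) (ψ : S →ₐ[K] R)
    (hφψ : ∀ b, φ (ψ b) = b) (D : Derivation K R R) (b : S) :
    st17conj φ ψ hφψ D b = φ (D (ψ b)) := rfl

end St17Conj

noncomputable section St17Supported

variable {K : Type*} [Field K]

theorem st17_sup0 {a : MvPolynomial (Fin 3) K}
    (ha : a ∈ MvPolynomial.supported K ({0} : Set (Fin 3))) :
    ∃ α : Polynomial K, st17φ a = Polynomial.C (Polynomial.C α) := by
  have ha' : a ∈ Algebra.adjoin K (MvPolynomial.X '' ({0} : Set (Fin 3))) := ha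
  induction ha' using Algebra.adjoin_induction with
  | mem x hx =>
    obtain ⟨i, hi, rfl⟩ := hx
    rw [Set.mem_singleton_iff] at hi
    subst hi
    exact ⟨Polynomial.X, st17φ_X0⟩
  | algebraMap r =>
    refine ⟨Polynomial.C r, ?_⟩
    rw [AlgHom.commutes]
    rw [Polynomial.algebraMap_apply, Polynomial.algebraMap_apply, Polynomial.algebraMap_apply,
      Algebra.algebraMap_self_apply]
  | add x y hx hy ihx ihy =>
    obtain ⟨αx, hαx⟩ := ihx hx
    obtain ⟨αy, hαy⟩ := ihy hy
    exact ⟨αx + αy, by rw [map_add, hαx, hαy, ← map_add, ← map_add]⟩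
  | mul x y hx hy ihx ihy =>
    obtain ⟨αx, hαx⟩ := ihx hx
    obtain ⟨αy, hαy⟩ := ihy hy
    exact ⟨αx * αy, by rw [map_mul, hαx, hαy, ← map_mul, ← map_mul]⟩

theorem st17_sup01 {a : MvPolynomial (Fin 3) K}
    (ha : a ∈ MvPolynomial.supported K ({0, 1} : Set (Fin 3))) :
    ∃ α : Polynomial (Polynomial K), st17φ a = Polynomial.C α := by
  have ha' : a ∈ Algebra.adjoin K (MvPolynomial.X '' ({0, 1} : Set (Fin 3))) := ha
  induction ha' using Algebra.adjoin_induction with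
  | mem x hx =>
    obtain ⟨i, hi, rfl⟩ := hx
    rcases Set.mem_insert_iff.mp hi with hi | hi
    · subst hi
      exact ⟨Polynomial.C Polynomial.X, st17φ_X0⟩
    · rw [Set.mem_singleton_iff] at hi
      subst hi
      exact ⟨Polynomial.X, st17φ_X1⟩
  | algebraMap r =>
    refine ⟨Polynomial.C (Polynomial.C r), ?_⟩
    rw [AlgHom.commutes]
    rw [Polynomial.algebraMap_apply, Polynomial.algebraMap_apply, Polynomial.algebraMap_apply,
      Algebra.algebraMap_self_apply]
  | add x y hx hy ihx ihy =>
    obtain ⟨αx, hαx⟩ := ihx hx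
    obtain ⟨αy, hαy⟩ := ihy hy
    exact ⟨αx + αy, by rw [map_add, hαx, hαy, ← map_add]⟩
  | mul x y hx hy ihx ihy =>
    obtain ⟨αx, hαx⟩ := ihx hx
    obtain ⟨αy, hαy⟩ := ihy hy
    exact ⟨αx * αy, by rw [map_mul, hαx, hαy, ← map_mul]⟩

end St17Supported


/-- For `D = ∂_{x₁} + (a₂ x₂ + b₂) ∂_{x₂} + (a₃ x₃ + b₃) ∂_{x₃}` with
`a₂, b₂ ∈ K[x₁]`, `a₃, b₃ ∈ K[x₁, x₂]`, `a₃ ≠ 0` and `deg_{x₂} a₃ = 0`: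
if `D` is simple, then `x₂ ∉ Im D`. -/
theorem statement17 (K : Type*) [Field K] [CharZero K]
    (a2 b2 a3 b3 : MvPolynomial (Fin 3) K)
    (ha2 : a2 ∈ supported K ({0} : Set (Fin 3)))
    (hb2 : b2 ∈ supported K ({0} : Set (Fin 3)))
    (ha3 : a3 ∈ supported K ({0, 1} : Set (Fin 3)))
    (hb3 : b3 ∈ supported K ({0, 1} : Set (Fin 3)))
    (ha3ne : a3 ≠ 0)
    (ha3deg : degreeOf (1 : Fin 3) a3 = 0)
    (D : Derivation K (MvPolynomial (Fin 3) K) (MvPolynomial (Fin 3) K))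
    (hD1 : D (X 0) = 1)
    (hD2 : D (X 1) = a2 * X 1 + b2)
    (hD3 : D (X 2) = a3 * X 2 + b3)
    (hD : Derivation.IsSimple D) :
    ¬ ∃ f : MvPolynomial (Fin 3) K, D f = X 1 := by
  rintro ⟨f, hf⟩
  classical
  obtain ⟨α2, hα2⟩ := st17_sup0 ha2
  obtain ⟨β2, hβ2⟩ := st17_sup0 hb2
  obtain ⟨β3, hβ3⟩ := st17_sup01 hb3
  have ha3' : a3 ∈ supported K ({0} : Set (Fin 3)) := by
    rw [MvPolynomial.mem_supported] at ha3 ⊢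
    intro i hi
    rcases Set.mem_insert_iff.mp (ha3 hi) with h | h
    · exact h ▸ Set.mem_singleton _
    · exfalso
      rw [Set.mem_singleton_iff] at h
      subst h
      have hv : (1 : Fin 3) ∈ a3.vars := Finset.mem_coe.mp hi
      have hc : a3.degrees.count 1 ≠ 0 := by
        rw [MvPolynomial.vars_def] at hv
        exact Multiset.count_ne_zero.mpr (Multiset.mem_toFinset.mp hv)
      rw [MvPolynomial.degreeOf_def] at ha3deg
      exact hc ha3deg
  obtain ⟨α3, hα3C⟩ := st17_sup0 ha3'
  have hα3ne : α3 ≠ 0 := by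
    intro h
    apply ha3ne
    have hz : st17φ a3 = 0 := by rw [hα3C, h, map_zero, map_zero]
    calc a3 = st17ψ (st17φ a3) := (st17_ψφ a3).symm
      _ = 0 := by rw [hz, map_zero]
  set d : Derivation K (Polynomial (Polynomial (Polynomial K)))
      (Polynomial (Polynomial (Polynomial K))) :=
    st17conj (st17φ (K := K)) (st17ψ (K := K)) (st17_φψ (K := K)) D with hd
  have hd1 : d (Polynomial.C (Polynomial.C Polynomial.X)) = 1 := by
    rw [hd, st17conj_apply, st17ψ_C, st17χ2_C, st17χ1_X, hD1, map_one]
  have hd2 : d (Polynomial.C Polynomial.X)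
      = Polynomial.C (Polynomial.C α2) * Polynomial.C Polynomial.X
        + Polynomial.C (Polynomial.C β2) := by
    rw [hd, st17conj_apply, st17ψ_C, st17χ2_X, hD2, map_add, map_mul, hα2, hβ2, st17φ_X1]
  have hd3 : d Polynomial.X
      = Polynomial.C (Polynomial.C α3) * Polynomial.X + Polynomial.C β3 := by
    rw [hd, st17conj_apply, st17ψ_X, hD3, map_add, map_mul, hα3C, hβ3, st17φ_X2]
  have hdF : d (st17φ f) = Polynomial.C Polynomial.X := by
    rw [hd, st17conj_apply, st17_ψφ, hf, st17φ_X1]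
  obtain ⟨g, w, hg0, hgu, hgd⟩ := st17_bside α2 β2 α3 β3 hα3ne d hd1 hd2 hd3 (st17φ f) hdF
  have hDg : D (st17ψ g) = st17ψ w * st17ψ g := by
    have h1 : st17φ (D (st17ψ g)) = st17φ (st17ψ w * st17ψ g) := by
      have h2 : st17φ (D (st17ψ g)) = d g := by rw [hd, st17conj_apply]
      rw [h2, hgd, map_mul, st17_φψ, st17_φψ]
    have hinj : Function.Injective (st17φ (K := K)) := fun x y hxy => by
      rw [← st17_ψφ x, ← st17_ψφ y, hxy]
    exact hinj h1
  have hg0' : st17ψ g ≠ 0 := fun h => hg0 (by rw [← st17_φψ g, h, map_zero])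
  have hgu' : ¬ IsUnit (st17ψ g) := fun h => hgu (st17_φψ g ▸ h.map st17φ)
  exact st17_darboux D (st17ψ g) (st17ψ w) hg0' hgu' hDg hD
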